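/- Let γ : S¹ → ℝⁿ be a C^{1,1} simple closed curve, i.e. γ' is Lipschitz and γ' ≠ 0. Then DCSD(γ(S¹)) > 0. -/

import Mathlib

open Function Set

private lemma periodic_deriv'' {n : ℕ} {γ : ℝ → EuclideanSpace ℝ (Fin n)} {L : ℝ}
    (hper : Function.Periodic γ L) : Function.Periodic (deriv γ) L := by
  intro x
  have h : (fun y => γ (y + L)) = γ := funext fun y => hper y
  calc deriv γ (x + L) = deriv (fun y => γ (y + L)) x := (deriv_comp_add_const γ L x).symm
  _ = deriv γ x := by rw [h]

private lemma exists_red {L : ℝ} (hL : 0 < L) (x : ℝ) :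
    ∃ y ∈ Set.Ico (0:ℝ) L, ∃ k : ℤ, y = x - k * L :=
  ⟨x - ⌊x / L⌋ * L, ⟨Int.sub_floor_div_mul_nonneg x hL, Int.sub_floor_div_mul_lt x hL⟩,
    ⌊x / L⌋, rfl⟩

private lemma diff_int_mul {n : ℕ} {γ : ℝ → EuclideanSpace ℝ (Fin n)} {L : ℝ} (hL : 0 < L)
    (hper : Function.Periodic γ L) (hinj : Set.InjOn γ (Set.Ico 0 L)) {x y : ℝ}
    (h : γ x = γ y) : ∃ k : ℤ, x - y = k * L := by
  obtain ⟨x', hx', kx, hkx⟩ := exists_red hL x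
  obtain ⟨y', hy', ky, hky⟩ := exists_red hL y
  have hval : γ x' = γ y' := by
    rw [hkx, hky, hper.sub_int_mul_eq, hper.sub_int_mul_eq, h]
  have hxy : x' = y' := hinj hx' hy' hval
  refine ⟨kx - ky, ?_⟩
  have := hxy
  rw [hkx, hky] at this
  push_cast
  linarith

open Function Set

private lemma key_mono {n : ℕ} {γ : ℝ → EuclideanSpace ℝ (Fin n)} {C : NNReal} {m : ℝ}
    (hγ : ContDiff ℝ 1 γ) (hLip : LipschitzWith C (deriv γ))
    (hm : ∀ u, m ≤ ‖deriv γ u‖)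
    {a c b : ℝ} (hac : a < c) (hba : a ≤ b) (hbc : b ≤ c)
    (hd : (C : ℝ) * (c - a) < m) :
    (inner ℝ (γ a) (deriv γ b) : ℝ) < inner ℝ (γ c) (deriv γ b) := by
  have hdiff : Differentiable ℝ γ := hγ.differentiable one_ne_zero
  set w := deriv γ b with hw
  have hφ : ∀ u, HasDerivAt (fun v => (inner ℝ (γ v) w : ℝ)) (inner ℝ (deriv γ u) w) u := by
    intro u
    simpa using (HasDerivAt.inner ℝ (hdiff u).hasDerivAt (hasDerivAt_const u w))
  have hcont : ContinuousOn (fun v => (inner ℝ (γ v) w : ℝ)) (Set.Icc a c) :=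
    fun u _ => ((hφ u).continuousAt).continuousWithinAt
  have hpos : ∀ u ∈ interior (Set.Icc a c),
      0 < deriv (fun v => (inner ℝ (γ v) w : ℝ)) u := by
    intro u hu
    rw [interior_Icc, Set.mem_Ioo] at hu
    rw [(hφ u).deriv]
    have hdub : dist u b ≤ c - a := by
      rw [Real.dist_eq, abs_le]; constructor <;> linarith
    have h1 : ‖deriv γ u - w‖ ≤ (C : ℝ) * (c - a) := by
      have h := hLip.dist_le_mul u b
      rw [dist_eq_norm] at h
      refine h.trans ?_
      exact mul_le_mul_of_nonneg_left hdub C.coe_nonneg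
    have hm0 : 0 < m := lt_of_le_of_lt (mul_nonneg C.coe_nonneg (by linarith)) hd
    have hw0 : (0:ℝ) < ‖w‖ := lt_of_lt_of_le hm0 (hm b)
    have h2 : |(inner ℝ (deriv γ u - w) w : ℝ)| ≤ ‖deriv γ u - w‖ * ‖w‖ :=
      abs_real_inner_le_norm _ _
    have h3 : (inner ℝ (deriv γ u) w : ℝ) = inner ℝ w w + inner ℝ (deriv γ u - w) w := by
      rw [inner_sub_left]; ring
    have h4 : (inner ℝ w w : ℝ) = ‖w‖ ^ 2 := real_inner_self_eq_norm_sq w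
    have h5 : m ≤ ‖w‖ := hm b
    have h6 := abs_le.1 h2
    nlinarith [h6.1, h6.2]
  have hmono := strictMonoOn_of_deriv_pos (convex_Icc a c) hcont hpos
  exact hmono (Set.left_mem_Icc.2 hac.le) (Set.right_mem_Icc.2 hac.le) hac

private lemma inner_ne_near {n : ℕ} {γ : ℝ → EuclideanSpace ℝ (Fin n)} {C : NNReal} {m : ℝ}
    (hγ : ContDiff ℝ 1 γ) (hLip : LipschitzWith C (deriv γ))
    (hm : ∀ u, m ≤ ‖deriv γ u‖) {s t : ℝ} (hne : s ≠ t)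
    (hd : (C : ℝ) * |s - t| < m) :
    (inner ℝ (γ s - γ t) (deriv γ t) : ℝ) ≠ 0 := by
  rcases hne.lt_or_gt with h | h
  · -- s < t, base point t = upper endpoint
    have habs : |s - t| = t - s := by rw [abs_of_neg (by linarith)]; ring
    rw [habs] at hd
    have hk := key_mono hγ hLip hm h h.le le_rfl hd
    rw [inner_sub_left]
    intro hz
    exact absurd (by linarith : (inner ℝ (γ s) (deriv γ t) : ℝ) = inner ℝ (γ t) (deriv γ t)) hk.ne
  · -- t < s, base point t = lower endpoint
    have habs : |s - t| = s - t := abs_of_pos (by linarith)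
    rw [habs] at hd
    have hk := key_mono hγ hLip hm h le_rfl h.le hd
    rw [inner_sub_left]
    intro hz
    exact absurd (by linarith : (inner ℝ (γ s) (deriv γ t) : ℝ) = inner ℝ (γ t) (deriv γ t)) hk.ne'

private lemma dc_exists {n : ℕ} {γ : ℝ → EuclideanSpace ℝ (Fin n)} {L : ℝ} (hL : 0 < L)
    (hγ : ContDiff ℝ 1 γ) (hper : Function.Periodic γ L)
    (hinj : Set.InjOn γ (Set.Ico 0 L)) :
    ∃ s t : ℝ, γ s ≠ γ t ∧ (inner ℝ (γ s - γ t) (deriv γ s) : ℝ) = 0 ∧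
      (inner ℝ (γ s - γ t) (deriv γ t) : ℝ) = 0 := by
  have hdiff : Differentiable ℝ γ := hγ.differentiable one_ne_zero
  have hcont : Continuous γ := hγ.continuous
  have hK : IsCompact (Set.Icc (0:ℝ) L ×ˢ Set.Icc (0:ℝ) L) := isCompact_Icc.prod isCompact_Icc
  have hKne : (Set.Icc (0:ℝ) L ×ˢ Set.Icc (0:ℝ) L).Nonempty := ⟨(0,0), Set.mk_mem_prod ⟨le_rfl, hL.le⟩ ⟨le_rfl, hL.le⟩⟩
  obtain ⟨p, hpmem, hpmax⟩ := hK.exists_isMaxOn hKne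
    (((hcont.comp continuous_fst).dist (hcont.comp continuous_snd)).continuousOn)
  have hglob : ∀ x y : ℝ, dist (γ x) (γ y) ≤ dist (γ p.1) (γ p.2) := by
    intro x y
    obtain ⟨x', hx', kx, hkx⟩ := exists_red hL x
    obtain ⟨y', hy', ky, hky⟩ := exists_red hL y
    have h1 : γ x' = γ x := by rw [hkx]; exact hper.sub_int_mul_eq kx
    have h2 : γ y' = γ y := by rw [hky]; exact hper.sub_int_mul_eq ky
    have hmem : ((x', y') : ℝ × ℝ) ∈ Set.Icc (0:ℝ) L ×ˢ Set.Icc (0:ℝ) L :=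
      Set.mk_mem_prod (Set.Ico_subset_Icc_self hx') (Set.Ico_subset_Icc_self hy')
    have := isMaxOn_iff.mp hpmax (x', y') hmem
    simpa [h1, h2] using this
  have hne : γ p.1 ≠ γ p.2 := by
    intro h
    have hd0 : 0 < dist (γ 0) (γ (L/2)) := by
      rw [dist_pos]
      intro he
      have := hinj ⟨le_rfl, hL⟩ ⟨by linarith, by linarith⟩ he
      linarith
    have := hglob 0 (L/2)
    rw [h, dist_self] at this
    linarith
  have hmax1 : IsLocalMax (fun u => (inner ℝ (γ u - γ p.2) (γ u - γ p.2) : ℝ)) p.1 := by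
    refine Filter.Eventually.of_forall fun u => ?_
    simp only [real_inner_self_eq_norm_sq, ← dist_eq_norm]
    exact pow_le_pow_left₀ dist_nonneg (hglob u p.2) 2
  have hmax2 : IsLocalMax (fun u => (inner ℝ (γ p.1 - γ u) (γ p.1 - γ u) : ℝ)) p.2 := by
    refine Filter.Eventually.of_forall fun u => ?_
    simp only [real_inner_self_eq_norm_sq, ← dist_eq_norm]
    exact pow_le_pow_left₀ dist_nonneg (hglob p.1 u) 2
  have hD1 : HasDerivAt (fun u => (inner ℝ (γ u - γ p.2) (γ u - γ p.2) : ℝ))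
      ((inner ℝ (γ p.1 - γ p.2) (deriv γ p.1) : ℝ) + inner ℝ (deriv γ p.1) (γ p.1 - γ p.2)) p.1 := by
    have he : HasDerivAt (fun u => γ u - γ p.2) (deriv γ p.1) p.1 :=
      ((hdiff p.1).hasDerivAt).sub_const _
    exact HasDerivAt.inner ℝ he he
  have hD2 : HasDerivAt (fun u => (inner ℝ (γ p.1 - γ u) (γ p.1 - γ u) : ℝ))
      ((inner ℝ (γ p.1 - γ p.2) (-deriv γ p.2) : ℝ) + inner ℝ (-deriv γ p.2) (γ p.1 - γ p.2)) p.2 := by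
    have he : HasDerivAt (fun u => γ p.1 - γ u) (-deriv γ p.2) p.2 :=
      ((hdiff p.2).hasDerivAt).const_sub _
    exact HasDerivAt.inner ℝ he he
  have h1 : (inner ℝ (γ p.1 - γ p.2) (deriv γ p.1) : ℝ) = 0 := by
    have hz := hmax1.deriv_eq_zero
    rw [hD1.deriv] at hz
    linarith [hz, real_inner_comm (γ p.1 - γ p.2) (deriv γ p.1)]
  have h2 : (inner ℝ (γ p.1 - γ p.2) (deriv γ p.2) : ℝ) = 0 := by
    have hz := hmax2.deriv_eq_zero
    rw [hD2.deriv] at hz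
    rw [inner_neg_right, inner_neg_left] at hz
    linarith [hz, real_inner_comm (γ p.1 - γ p.2) (deriv γ p.2)]
  exact ⟨p.1, p.2, hne, h1, h2⟩

/-- The set of distances realized by double critical pairs of a closed curve
`γ : ℝ → ℝⁿ`. -/
def dcDists {n : ℕ} (γ : ℝ → EuclideanSpace ℝ (Fin n)) : Set ℝ :=
  {r | ∃ s t : ℝ, γ s ≠ γ t ∧
    (inner ℝ (γ s - γ t) (deriv γ s) : ℝ) = 0 ∧
    (inner ℝ (γ s - γ t) (deriv γ t) : ℝ) = 0 ∧
    r = dist (γ s) (γ t)}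

/-- The double critical self distance. -/
noncomputable def DCSD {n : ℕ} (γ : ℝ → EuclideanSpace ℝ (Fin n)) : ℝ :=
  sInf (dcDists γ)

/-- A C^{1,1} simple closed curve (γ' Lipschitz, γ' ≠ 0) has DCSD > 0. -/
theorem dcsd_pos_of_C11 {n : ℕ} (L : ℝ) (hL : 0 < L) (C : NNReal)
    (γ : ℝ → EuclideanSpace ℝ (Fin n))
    (hγ : ContDiff ℝ 1 γ) (hper : Function.Periodic γ L)
    (hinj : Set.InjOn γ (Set.Ico 0 L))
    (hLip : LipschitzWith C (deriv γ))
    (hreg : ∀ t, deriv γ t ≠ 0) :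
    0 < DCSD γ := by
  have hder_cont : Continuous (deriv γ) := hγ.continuous_deriv le_rfl
  have hperd : Function.Periodic (deriv γ) L := periodic_deriv'' hper
  -- positive lower bound m for ‖deriv γ‖
  obtain ⟨u₀, hu₀mem, hu₀min⟩ := isCompact_Icc.exists_isMinOn (⟨0, le_rfl, hL.le⟩ :
      (Set.Icc (0:ℝ) L).Nonempty) (hder_cont.norm.continuousOn)
  set m := ‖deriv γ u₀‖ with hmdef
  have hm0 : 0 < m := norm_pos_iff.2 (hreg u₀)
  have hm : ∀ u, m ≤ ‖deriv γ u‖ := by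
    intro u
    obtain ⟨y, hy, k, hk⟩ := exists_red hL u
    have hval : deriv γ y = deriv γ u := by rw [hk]; exact hperd.sub_int_mul_eq k
    rw [← hval]
    exact isMinOn_iff.mp hu₀min y (Set.Ico_subset_Icc_self hy)
  -- threshold δ
  set δ : ℝ := min (L/2) (m / (2 * ((C : ℝ) + 1))) with hδdef
  have hC : (0:ℝ) ≤ C := C.coe_nonneg
  have hδ0 : 0 < δ := lt_min (by linarith) (div_pos hm0 (by positivity))
  have hδL : δ ≤ L/2 := min_le_left _ _
  have hδC : (C:ℝ) * δ < m := by
    have h1 : (C:ℝ) * δ ≤ (C:ℝ) * (m / (2 * ((C:ℝ) + 1))) :=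
      mul_le_mul_of_nonneg_left (min_le_right _ _) hC
    have h2 : (C:ℝ) * (m / (2 * ((C:ℝ) + 1))) < m := by
      rw [← mul_div_assoc, div_lt_iff₀ (by positivity)]
      nlinarith
    linarith
  -- compact set of "far" pairs
  set K : Set (ℝ × ℝ) := (Set.Icc (-L) (2*L) ×ˢ Set.Icc (-L) (2*L)) ∩
      ((fun p : ℝ × ℝ => |p.1 - p.2|) ⁻¹' Set.Icc δ (L/2)) with hKdef
  have hKcomp : IsCompact K := (isCompact_Icc.prod isCompact_Icc).inter_right
    (IsClosed.preimage ((continuous_fst.sub continuous_snd).abs) isClosed_Icc)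
  have hKne : K.Nonempty := by
    refine ⟨(L/2, 0), Set.mk_mem_prod ⟨by linarith, by linarith⟩ ⟨by linarith, by linarith⟩, ?_⟩
    simp only [Set.mem_preimage, Set.mem_Icc]
    rw [sub_zero, abs_of_pos (by linarith)]
    exact ⟨hδL, le_rfl⟩
  obtain ⟨p₀, hp₀K, hp₀min⟩ := hKcomp.exists_isMinOn hKne
    (((hγ.continuous.comp continuous_fst).dist (hγ.continuous.comp continuous_snd)).continuousOn)
  set ε := dist (γ p₀.1) (γ p₀.2) with hεdef
  have hεpos : 0 < ε := by
    rw [hεdef, dist_pos]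
    intro h
    obtain ⟨k, hk⟩ := diff_int_mul hL hper hinj h
    have habs := hp₀K.2
    simp only [Set.mem_preimage, Set.mem_Icc] at habs
    rw [hk] at habs
    obtain ⟨hge, hle⟩ := habs
    rcases eq_or_ne k 0 with h0 | h0
    · rw [h0] at hge; simp at hge; linarith
    · have hk1 : (1:ℝ) ≤ |(k:ℝ)| := by exact_mod_cast Int.one_le_abs h0
      rw [abs_mul, abs_of_pos hL] at hle
      have := mul_le_mul_of_nonneg_right hk1 hL.le
      linarith
  -- every double critical distance is ≥ ε
  have hbound : ∀ r ∈ dcDists γ, ε ≤ r := by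
    rintro r ⟨s, t, hne, _hi1, hi2, rfl⟩
    obtain ⟨a, ha, ka, hka⟩ := exists_red hL s
    obtain ⟨b, hb, kb, hkb⟩ := exists_red hL t
    have hγa : γ a = γ s := by rw [hka]; exact hper.sub_int_mul_eq ka
    have hγb : γ b = γ t := by rw [hkb]; exact hper.sub_int_mul_eq kb
    have hdb : deriv γ b = deriv γ t := by rw [hkb]; exact hperd.sub_int_mul_eq kb
    obtain ⟨b', hγb', hdb', hb'lo, hb'hi, hclose⟩ :
        ∃ b', γ b' = γ t ∧ deriv γ b' = deriv γ t ∧ -L ≤ b' ∧ b' ≤ 2*L ∧ |a - b'| ≤ L/2 := by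
      rcases le_or_gt (a - b) (L/2) with h1 | h1
      · rcases le_or_gt (-(L/2)) (a - b) with h2 | h2
        · exact ⟨b, hγb, hdb, by linarith [hb.1], by linarith [hb.2],
            by rw [abs_le]; constructor <;> linarith⟩
        · refine ⟨b - L, ?_, ?_, by linarith [hb.1], by linarith [hb.2], ?_⟩
          · rw [← hγb]
            have := hper.sub_int_mul_eq (x := b) (1 : ℤ)
            simpa using this
          · rw [← hdb]
            have := hperd.sub_int_mul_eq (x := b) (1 : ℤ)
            simpa using this
          · rw [abs_le]
            constructor
            · linarith [ha.1, hb.2]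
            · linarith
      · refine ⟨b + L, by rw [hper b]; exact hγb, by rw [hperd b]; exact hdb,
          by linarith [hb.1], by linarith [hb.2], ?_⟩
        rw [abs_le]
        constructor
        · linarith
        · linarith [ha.2, hb.1]
    have haneb' : γ a ≠ γ b' := by rw [hγa, hγb']; exact hne
    have hfar : δ ≤ |a - b'| := by
      by_contra hlt
      push_neg at hlt
      have hab : a ≠ b' := fun h => haneb' (by rw [h])
      have hsm : (C:ℝ) * |a - b'| < m :=
        lt_of_le_of_lt (mul_le_mul_of_nonneg_left hlt.le hC) hδC
      have hnz := inner_ne_near hγ hLip hm hab hsm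
      rw [hγa, hγb', hdb'] at hnz
      exact hnz hi2
    have hmemK : ((a, b') : ℝ × ℝ) ∈ K := by
      refine ⟨Set.mk_mem_prod ⟨by linarith [ha.1], by linarith [ha.2]⟩ ⟨hb'lo, hb'hi⟩, ?_⟩
      simp only [Set.mem_preimage, Set.mem_Icc]
      exact ⟨hfar, hclose⟩
    have hmin := isMinOn_iff.mp hp₀min (a, b') hmemK
    calc ε ≤ dist (γ a) (γ b') := hmin
    _ = dist (γ s) (γ t) := by rw [hγa, hγb']
  obtain ⟨s, t, hne, h1, h2⟩ := dc_exists hL hγ hper hinj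
  have hnonempty : (dcDists γ).Nonempty := ⟨dist (γ s) (γ t), s, t, hne, h1, h2, rfl⟩
  exact lt_of_lt_of_le hεpos (le_csInf hnonempty hbound)
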